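/- The vertices of a convex polygon with an odd number 2n+1 of vertices (no three collinear, all vertices extreme) form a monochromatic configuration: all points are equivalent under the Orchard relation. -/

import Mathlib

open scoped Classical

noncomputable section

/-- Orientation determinant of two vectors in the plane. -/
def det2 (u v : ℝ × ℝ) : ℝ := u.1 * v.2 - u.2 * v.1

/-- The line through `A` and `B` separates the points `P` and `Q`
(they lie in distinct open half-planes determined by the line). -/
def SepLine (A B P Q : ℝ × ℝ) : Prop :=
  det2 (B - A) (P - A) * det2 (B - A) (Q - A) < 0

/-- A finite planar point set is a generic configuration if no three of its
points are collinear. -/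
def Generic (C : Finset (ℝ × ℝ)) : Prop :=
  ∀ a ∈ C, ∀ b ∈ C, ∀ c ∈ C, a ≠ b → a ≠ c → b ≠ c →
    ¬ Collinear ℝ ({a, b, c} : Set (ℝ × ℝ))

/-- `nsep C P Q` is the number of lines spanned by (unordered) pairs of points of
`C \ {P,Q}` that separate `P` from `Q`. -/
def nsep (C : Finset (ℝ × ℝ)) (P Q : ℝ × ℝ) : ℕ :=
  (((C \ {P, Q}).powersetCard 2).filter
    (fun s => ∃ A ∈ s, ∃ B ∈ s, A ≠ B ∧ SepLine A B P Q)).card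

/-- The Orchard relation: `P ∼ Q` iff `n(P,Q) ≡ n - 3 (mod 2)` where `n = |C|`. -/
def Orchard (C : Finset (ℝ × ℝ)) (P Q : ℝ × ℝ) : Prop :=
  (nsep C P Q : ℤ) ≡ (C.card : ℤ) - 3 [ZMOD 2]

/-- A configuration is monochromatic if all its points are Orchard-equivalent. -/
def Mono (C : Finset (ℝ × ℝ)) : Prop :=
  ∀ P ∈ C, ∀ Q ∈ C, P ≠ Q → Orchard C P Q

/-- A configuration is in convex position if each of its points is a vertex of
the convex hull. -/
def ConvexPos (C : Finset (ℝ × ℝ)) : Prop :=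
  ∀ P ∈ C, P ∉ convexHull ℝ ((C : Set (ℝ × ℝ)) \ {P})

/- ----------------- auxiliary lemmas ----------------- -/

lemma combo_mem_convexHull (a b c : ℝ × ℝ) {x y z : ℝ} (hx : 0 ≤ x) (hy : 0 ≤ y)
    (hz : 0 ≤ z) (hs : x + y + z = 1) :
    x • a + y • b + z • c ∈ convexHull ℝ ({a, b, c} : Set (ℝ × ℝ)) := by
  have ha : a ∈ convexHull ℝ ({a, b, c} : Set (ℝ × ℝ)) := subset_convexHull ℝ _ (by simp)
  have hb : b ∈ convexHull ℝ ({a, b, c} : Set (ℝ × ℝ)) := subset_convexHull ℝ _ (by simp)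
  have hc : c ∈ convexHull ℝ ({a, b, c} : Set (ℝ × ℝ)) := subset_convexHull ℝ _ (by simp)
  have hcv := convex_convexHull ℝ ({a, b, c} : Set (ℝ × ℝ))
  rcases eq_or_lt_of_le (by linarith : (0:ℝ) ≤ x + y) with h | h
  · have hx0 : x = 0 := by linarith
    have hy0 : y = 0 := by linarith
    have hz1 : z = 1 := by linarith
    simp [hx0, hy0, hz1, hc]
  · have hm : (x / (x + y)) • a + (y / (x + y)) • b ∈ convexHull ℝ ({a, b, c} : Set (ℝ × ℝ)) :=
      hcv ha hb (div_nonneg hx h.le) (div_nonneg hy h.le)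
        (by rw [← add_div, div_self (ne_of_gt h)])
    have key : x • a + y • b + z • c = (x + y) • ((x / (x + y)) • a + (y / (x + y)) • b) + z • c := by
      rw [smul_add, smul_smul, smul_smul]
      rw [mul_div_cancel₀ _ (ne_of_gt h), mul_div_cancel₀ _ (ne_of_gt h)]
    rw [key]
    exact hcv hm hc h.le hz (by linarith)

lemma collinear_of_det2_eq_zero {a b c : ℝ × ℝ} (h : det2 (b - a) (c - a) = 0) :
    Collinear ℝ ({a, b, c} : Set (ℝ × ℝ)) := by
  simp only [det2, Prod.fst_sub, Prod.snd_sub] at h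
  rcases eq_or_ne b a with rfl | hba
  · have : ({b, b, c} : Set (ℝ × ℝ)) = {b, c} := by
      simp [Set.insert_comm]
    rw [this]
    exact collinear_pair ℝ b c
  · rw [collinear_iff_of_mem (Set.mem_insert a {b, c})]
    refine ⟨b - a, ?_⟩
    intro p hp
    simp only [Set.mem_insert_iff, Set.mem_singleton_iff] at hp
    rcases hp with rfl | rfl | rfl
    · exact ⟨0, by simp⟩
    · exact ⟨1, by simp⟩
    · have hne : b.1 - a.1 ≠ 0 ∨ b.2 - a.2 ≠ 0 := by
        by_contra hcon
        push_neg at hcon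
        exact hba (Prod.ext (by linarith [hcon.1]) (by linarith [hcon.2]))
      rcases hne with h1 | h2
      · refine ⟨(p.1 - a.1) / (b.1 - a.1), ?_⟩
        have e2 : p.2 = (p.1 - a.1) / (b.1 - a.1) * (b.2 - a.2) + a.2 := by
          field_simp
          linear_combination h
        have e1 : p.1 = (p.1 - a.1) / (b.1 - a.1) * (b.1 - a.1) + a.1 := by
          field_simp
          ring
        exact Prod.ext (by simpa using e1) (by simpa using e2)
      · refine ⟨(p.2 - a.2) / (b.2 - a.2), ?_⟩
        have e1 : p.1 = (p.2 - a.2) / (b.2 - a.2) * (b.1 - a.1) + a.1 := by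
          field_simp
          linear_combination -h
        have e2 : p.2 = (p.2 - a.2) / (b.2 - a.2) * (b.2 - a.2) + a.2 := by
          field_simp
          ring
        exact Prod.ext (by simpa using e1) (by simpa using e2)

lemma sepline_comm_of_convex (A B P Q : ℝ × ℝ)
    (hd : det2 (B - A) (P - A) ≠ 0)
    (hABQ : det2 (B - A) (Q - A) ≠ 0)
    (hAPQ : det2 (Q - P) (A - P) ≠ 0)
    (hBPQ : det2 (Q - P) (B - P) ≠ 0)
    (hA : A ∉ convexHull ℝ ({B, P, Q} : Set (ℝ × ℝ)))
    (hB : B ∉ convexHull ℝ ({A, P, Q} : Set (ℝ × ℝ)))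
    (hP : P ∉ convexHull ℝ ({A, B, Q} : Set (ℝ × ℝ)))
    (hQ : Q ∉ convexHull ℝ ({A, B, P} : Set (ℝ × ℝ))) :
    SepLine A B P Q ↔ SepLine P Q A B := by
  obtain ⟨d, hd_def⟩ : ∃ x : ℝ, x = det2 (B - A) (P - A) := ⟨_, rfl⟩
  obtain ⟨β, hβ_def⟩ : ∃ x : ℝ, x = det2 (Q - A) (P - A) / d := ⟨_, rfl⟩
  obtain ⟨γ, hγ_def⟩ : ∃ x : ℝ, x = det2 (B - A) (Q - A) / d := ⟨_, rfl⟩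
  obtain ⟨α, hα_def⟩ : ∃ x : ℝ, x = 1 - β - γ := ⟨_, rfl⟩
  have hd0 : d ≠ 0 := by rw [hd_def]; exact hd
  have hd' : (B.1 - A.1) * (P.2 - A.2) - (B.2 - A.2) * (P.1 - A.1) ≠ 0 := by
    simpa only [det2, Prod.fst_sub, Prod.snd_sub] using hd
  have hsum : α + β + γ = 1 := by rw [hα_def]; ring
  have e1 : det2 (B - A) (Q - A) = γ * d := by
    rw [hγ_def]; field_simp
  have e2' : det2 (Q - P) (A - P) = -det2 (Q - A) (P - A) := by
    simp only [det2, Prod.fst_sub, Prod.snd_sub]; ring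
  have e2 : det2 (Q - P) (A - P) = -(β * d) := by
    rw [e2', hβ_def]; field_simp
  have e3' : det2 (Q - P) (B - P) =
      det2 (B - A) (P - A) - det2 (Q - A) (P - A) - det2 (B - A) (Q - A) := by
    simp only [det2, Prod.fst_sub, Prod.snd_sub]; ring
  have e3 : det2 (Q - P) (B - P) = α * d := by
    rw [e3', hα_def, hβ_def, hγ_def, hd_def]
    field_simp
  have hγ0 : γ ≠ 0 := by
    intro h; exact hABQ (by rw [e1, h, zero_mul])
  have hβ0 : β ≠ 0 := by
    intro h; exact hAPQ (by rw [e2, h, zero_mul, neg_zero])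
  have hα0 : α ≠ 0 := by
    intro h; exact hBPQ (by rw [e3, h, zero_mul])
  have hdd : 0 < d * d := mul_self_pos.mpr hd0
  -- barycentric representation of Q
  have hQ1 : Q.1 = α * A.1 + β * B.1 + γ * P.1 := by
    rw [hα_def, hβ_def, hγ_def, hd_def]
    field_simp
    simp only [det2, Prod.fst_sub, Prod.snd_sub]
    ring
  have hQ2 : Q.2 = α * A.2 + β * B.2 + γ * P.2 := by
    rw [hα_def, hβ_def, hγ_def, hd_def]
    field_simp
    simp only [det2, Prod.fst_sub, Prod.snd_sub]
    ring
  -- hull exclusions as sign constraints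
  have h1 : ¬ (0 < α ∧ 0 < β ∧ 0 < γ) := by
    rintro ⟨ha', hb', hc'⟩
    apply hQ
    have hco : Q = α • A + β • B + γ • P := by
      refine Prod.ext ?_ ?_ <;>
        simp only [Prod.fst_add, Prod.snd_add, Prod.smul_fst, Prod.smul_snd, smul_eq_mul]
      · exact hQ1
      · exact hQ2
    rw [hco]
    exact combo_mem_convexHull A B P ha'.le hb'.le hc'.le hsum
  have h2 : ¬ (α < 0 ∧ β < 0 ∧ 0 < γ) := by
    rintro ⟨ha', hb', hc'⟩
    apply hP
    have hco : P = (-α / γ) • A + (-β / γ) • B + (1 / γ) • Q := by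
      refine Prod.ext ?_ ?_ <;>
        simp only [Prod.fst_add, Prod.snd_add, Prod.smul_fst, Prod.smul_snd, smul_eq_mul]
      · rw [div_mul_eq_mul_div, div_mul_eq_mul_div, div_mul_eq_mul_div,
            ← add_div, ← add_div, eq_div_iff hγ0]
        linear_combination -hQ1
      · rw [div_mul_eq_mul_div, div_mul_eq_mul_div, div_mul_eq_mul_div,
            ← add_div, ← add_div, eq_div_iff hγ0]
        linear_combination -hQ2
    rw [hco]
    exact combo_mem_convexHull A B Q (div_nonneg (by linarith) hc'.le)
      (div_nonneg (by linarith) hc'.le) (div_nonneg (by linarith) hc'.le)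
      (by rw [← add_div, ← add_div, div_eq_iff hγ0]; linarith)
  have h3 : ¬ (0 < α ∧ β < 0 ∧ γ < 0) := by
    rintro ⟨ha', hb', hc'⟩
    apply hA
    have hco : A = (-β / α) • B + (-γ / α) • P + (1 / α) • Q := by
      refine Prod.ext ?_ ?_ <;>
        simp only [Prod.fst_add, Prod.snd_add, Prod.smul_fst, Prod.smul_snd, smul_eq_mul]
      · rw [div_mul_eq_mul_div, div_mul_eq_mul_div, div_mul_eq_mul_div,
            ← add_div, ← add_div, eq_div_iff hα0]
        linear_combination -hQ1
      · rw [div_mul_eq_mul_div, div_mul_eq_mul_div, div_mul_eq_mul_div,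
            ← add_div, ← add_div, eq_div_iff hα0]
        linear_combination -hQ2
    rw [hco]
    exact combo_mem_convexHull B P Q (div_nonneg (by linarith) ha'.le)
      (div_nonneg (by linarith) ha'.le) (div_nonneg (by linarith) ha'.le)
      (by rw [← add_div, ← add_div, div_eq_iff hα0]; linarith)
  have h4 : ¬ (α < 0 ∧ 0 < β ∧ γ < 0) := by
    rintro ⟨ha', hb', hc'⟩
    apply hB
    have hco : B = (-α / β) • A + (-γ / β) • P + (1 / β) • Q := by
      refine Prod.ext ?_ ?_ <;>
        simp only [Prod.fst_add, Prod.snd_add, Prod.smul_fst, Prod.smul_snd, smul_eq_mul]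
      · rw [div_mul_eq_mul_div, div_mul_eq_mul_div, div_mul_eq_mul_div,
            ← add_div, ← add_div, eq_div_iff hβ0]
        linear_combination -hQ1
      · rw [div_mul_eq_mul_div, div_mul_eq_mul_div, div_mul_eq_mul_div,
            ← add_div, ← add_div, eq_div_iff hβ0]
        linear_combination -hQ2
    rw [hco]
    exact combo_mem_convexHull A P Q (div_nonneg (by linarith) hb'.le)
      (div_nonneg (by linarith) hb'.le) (div_nonneg (by linarith) hb'.le)
      (by rw [← add_div, ← add_div, div_eq_iff hβ0]; linarith)
  -- translate SepLine to signs
  have sep1 : SepLine A B P Q ↔ γ < 0 := by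
    unfold SepLine
    rw [← hd_def, e1]
    constructor <;> intro h <;> nlinarith [hdd]
  have sep2 : SepLine P Q A B ↔ 0 < α * β := by
    unfold SepLine
    rw [e2, e3]
    constructor <;> intro h <;> nlinarith [hdd]
  rw [sep1, sep2]
  rcases hα0.lt_or_gt with ha | ha <;> rcases hβ0.lt_or_gt with hb | hb <;>
    rcases hγ0.lt_or_gt with hc | hc <;>
    constructor <;> intro hx <;>
    first
      | (exfalso; exact h1 ⟨ha, hb, hc⟩)
      | (exfalso; exact h2 ⟨ha, hb, hc⟩)
      | (exfalso; exact h3 ⟨ha, hb, hc⟩)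
      | (exfalso; exact h4 ⟨ha, hb, hc⟩)
      | (exfalso; linarith)
      | nlinarith

/-- The vertices of a convex polygon with an odd number `2n+1` of vertices form
a monochromatic configuration. -/
theorem odd_convex_polygon_mono (C : Finset (ℝ × ℝ)) (hC : Generic C)
    (hconv : ConvexPos C) (n : ℕ) (hcard : C.card = 2 * n + 1) :
    Mono C := by
  intro P hPC Q hQC hPQ
  have hdet : ∀ a ∈ C, ∀ b ∈ C, ∀ c ∈ C, a ≠ b → a ≠ c → b ≠ c →
      det2 (b - a) (c - a) ≠ 0 := fun a ha b hb c hc h1 h2 h3 h0 =>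
    hC a ha b hb c hc h1 h2 h3 (collinear_of_det2_eq_zero h0)
  have hhull : ∀ a ∈ C, ∀ b ∈ C, ∀ c ∈ C, ∀ x ∈ C, x ≠ a → x ≠ b → x ≠ c →
      x ∉ convexHull ℝ ({a, b, c} : Set (ℝ × ℝ)) := by
    intro a ha b hb c hc x hx h1 h2 h3 hmem
    refine hconv x hx (convexHull_mono ?_ hmem)
    intro y hy
    simp only [Set.mem_insert_iff, Set.mem_singleton_iff] at hy
    rcases hy with rfl | rfl | rfl <;>
      exact ⟨by simpa, by simp [Ne.symm ‹x ≠ _›]⟩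
  -- the set of points other than P, Q and the side function
  have hmemD : ∀ X, X ∈ C \ ({P, Q} : Finset (ℝ × ℝ)) ↔ X ∈ C ∧ X ≠ P ∧ X ≠ Q := by
    intro X
    simp [Finset.mem_sdiff, not_or]
  have hf0 : ∀ X ∈ C \ ({P, Q} : Finset (ℝ × ℝ)), det2 (Q - P) (X - P) ≠ 0 := by
    intro X hX
    obtain ⟨hXC, hXP, hXQ⟩ := (hmemD X).mp hX
    exact hdet P hPC Q hQC X hXC hPQ (Ne.symm hXP) (Ne.symm hXQ)
  have hsep : ∀ A ∈ C \ ({P, Q} : Finset (ℝ × ℝ)), ∀ B ∈ C \ ({P, Q} : Finset (ℝ × ℝ)),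
      A ≠ B → (SepLine A B P Q ↔ det2 (Q - P) (A - P) * det2 (Q - P) (B - P) < 0) := by
    intro A hA B hB hAB
    obtain ⟨hAC, hAP, hAQ⟩ := (hmemD A).mp hA
    obtain ⟨hBC, hBP, hBQ⟩ := (hmemD B).mp hB
    exact sepline_comm_of_convex A B P Q
      (hdet A hAC B hBC P hPC hAB hAP hBP)
      (hdet A hAC B hBC Q hQC hAB hAQ hBQ)
      (hdet P hPC Q hQC A hAC hPQ (Ne.symm hAP) (Ne.symm hAQ))
      (hdet P hPC Q hQC B hBC hPQ (Ne.symm hBP) (Ne.symm hBQ))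
      (hhull B hBC P hPC Q hQC A hAC hAB hAP hAQ)
      (hhull A hAC P hPC Q hQC B hBC (Ne.symm hAB) hBP hBQ)
      (hhull A hAC B hBC Q hQC P hPC (Ne.symm hAP) (Ne.symm hBP) hPQ)
      (hhull A hAC B hBC P hPC Q hQC (Ne.symm hAQ) (Ne.symm hBQ) (Ne.symm hPQ))
  set D := C \ ({P, Q} : Finset (ℝ × ℝ)) with hD
  set f : ℝ × ℝ → ℝ := fun X => det2 (Q - P) (X - P) with hf
  set Sp := D.filter (fun X => 0 < f X) with hSp
  set Sm := D.filter (fun X => f X < 0) with hSm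
  have himg : ((D.powersetCard 2).filter
        (fun s => ∃ A ∈ s, ∃ B ∈ s, A ≠ B ∧ SepLine A B P Q))
      = (Sp ×ˢ Sm).image (fun p => ({p.1, p.2} : Finset (ℝ × ℝ))) := by
    ext s
    simp only [Finset.mem_filter, Finset.mem_powersetCard, Finset.mem_image,
      Finset.mem_product, hSp, hSm]
    constructor
    · rintro ⟨⟨hsub, hcards⟩, A, hAs, B, hBs, hAB, hsepl⟩
      have hAD : A ∈ D := hsub hAs
      have hBD : B ∈ D := hsub hBs
      have hs2 : ({A, B} : Finset (ℝ × ℝ)) = s := by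
        apply Finset.eq_of_subset_of_card_le
        · intro x hx
          simp only [Finset.mem_insert, Finset.mem_singleton] at hx
          rcases hx with rfl | rfl <;> assumption
        · rw [hcards, Finset.card_insert_of_notMem (by simp [hAB]), Finset.card_singleton]
      have hfAB : f A * f B < 0 := (hsep A hAD B hBD hAB).mp hsepl
      by_cases hfA : 0 < f A
      · have hfB : f B < 0 := by nlinarith
        exact ⟨(A, B), ⟨⟨hAD, hfA⟩, hBD, hfB⟩, hs2⟩
      · have hfA' : f A < 0 := lt_of_le_of_ne (not_lt.mp hfA) (hf0 A hAD)
        have hfB : 0 < f B := by nlinarith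
        refine ⟨(B, A), ⟨⟨hBD, hfB⟩, hAD, hfA'⟩, ?_⟩
        rw [← hs2, Finset.pair_comm]
    · rintro ⟨⟨A, B⟩, ⟨⟨hAD, hfA⟩, hBD, hfB⟩, rfl⟩
      have hAB : A ≠ B := by
        intro h; rw [h] at hfA; linarith
      refine ⟨⟨?_, ?_⟩, A, by simp, B, by simp, hAB, ?_⟩
      · intro x hx
        simp only [Finset.mem_insert, Finset.mem_singleton] at hx
        rcases hx with rfl | rfl <;> assumption
      · rw [Finset.card_insert_of_notMem (by simp [hAB]), Finset.card_singleton]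
      · exact (hsep A hAD B hBD hAB).mpr (mul_neg_of_pos_of_neg hfA hfB)
  have hinj : Set.InjOn (fun p : (ℝ × ℝ) × (ℝ × ℝ) => ({p.1, p.2} : Finset (ℝ × ℝ)))
      ((Sp ×ˢ Sm) : Finset _) := by
    rintro ⟨A, B⟩ hp ⟨A', B'⟩ hq heq
    simp only [Finset.coe_product, Set.mem_prod, Finset.mem_coe, hSp, hSm,
      Finset.mem_filter] at hp hq
    obtain ⟨⟨hAD, hfA⟩, hBD, hfB⟩ := hp
    obtain ⟨⟨hAD', hfA'⟩, hBD', hfB'⟩ := hq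
    simp only at heq
    have hA'mem : A' ∈ ({A, B} : Finset (ℝ × ℝ)) := by rw [heq]; simp
    have hB'mem : B' ∈ ({A, B} : Finset (ℝ × ℝ)) := by rw [heq]; simp
    simp only [Finset.mem_insert, Finset.mem_singleton] at hA'mem hB'mem
    have hA'A : A' = A := by
      rcases hA'mem with h | h
      · exact h
      · exfalso; rw [h] at hfA'; linarith
    have hB'B : B' = B := by
      rcases hB'mem with h | h
      · exfalso; rw [h] at hfB'; linarith
      · exact h
    simp [hA'A, hB'B]
  have hcount : nsep C P Q = Sp.card * Sm.card := by
    unfold nsep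
    rw [← hD, himg, Finset.card_image_of_injOn hinj, Finset.card_product]
  have hDcard : D.card = C.card - 2 := by
    rw [hD, Finset.card_sdiff_of_subset]
    · rw [Finset.card_insert_of_notMem (by simp [hPQ]), Finset.card_singleton]
    · intro x hx
      simp only [Finset.mem_insert, Finset.mem_singleton] at hx
      rcases hx with rfl | rfl <;> assumption
  have hsum : Sp.card + Sm.card = D.card := by
    have hSm' : Sm = D.filter (fun X => ¬ 0 < f X) := by
      apply Finset.filter_congr
      intro x hx
      have := hf0 x hx
      constructor
      · intro h; exact not_lt.mpr (le_of_lt h)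
      · intro h
        exact lt_of_le_of_ne (not_lt.mp h) this
    rw [hSp, hSm', Finset.card_filter_add_card_filter_not]
  have hn1 : 1 ≤ n := by
    have : 1 < C.card := Finset.one_lt_card.mpr ⟨P, hPC, Q, hQC, hPQ⟩
    omega
  have hev : 2 ∣ Sp.card * Sm.card := by
    rcases Nat.even_or_odd Sp.card with ⟨k, hk⟩ | ⟨k, hk⟩
    · exact ⟨k * Sm.card, by rw [hk]; ring⟩
    · have : Even Sm.card := by
        rcases Nat.even_or_odd Sm.card with h | ⟨j, hj⟩
        · exact h
        · exfalso; omega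
      obtain ⟨j, hj⟩ := this
      exact ⟨Sp.card * j, by rw [hj]; ring⟩
  obtain ⟨m, hm⟩ := hev
  unfold Orchard
  rw [hcount, hm, hcard]
  show (↑(2 * m) : ℤ) % 2 = ((↑(2 * n + 1) : ℤ) - 3) % 2
  push_cast
  omega
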